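/- arXiv:1111.5947 — 6 statements merged into one kernel-verified Lean document; each statement's English description precedes it below -/
import Mathlib

section
/- If p and q are polynomials of degree at most n such that the integral of p over each subinterval [t_j, t_{j+1}] equals the integral of q over [t_j, t_{j+1}] for j = 0, 1, ..., n, where -1 = t_0 < t_1 < ... < t_{n+1} = 1, then p = q. -/
open Polynomial intervalIntegral

theorem measure_preserving_poly_unique (n : ℕ) (t : Fin (n + 2) → ℝ)
    (ht : StrictMono t) (ht0 : t 0 = -1) (htN : t (Fin.last (n + 1)) = 1)
    (p q : ℝ[X]) (hp : p.degree ≤ n) (hq : q.degree ≤ n)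
    (h : ∀ j : Fin (n + 1),
      (∫ x in (t j.castSucc)..(t j.succ), p.eval x) =
      ∫ x in (t j.castSucc)..(t j.succ), q.eval x) :
    p = q := by
  set r := p - q with hr
  rw [← sub_eq_zero]
  have hrc : Continuous fun x => r.eval x := r.continuous
  -- integral of r over each subinterval is 0
  have hint : ∀ j : Fin (n + 1), (∫ x in (t j.castSucc)..(t j.succ), r.eval x) = 0 := by
    intro j
    have : (∫ x in (t j.castSucc)..(t j.succ), r.eval x) =
        (∫ x in (t j.castSucc)..(t j.succ), p.eval x) -
        ∫ x in (t j.castSucc)..(t j.succ), q.eval x := by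
      rw [← intervalIntegral.integral_sub (p.continuous.intervalIntegrable _ _)
        (q.continuous.intervalIntegrable _ _)]
      simp [hr]
    rw [this, h j, sub_self]
  -- antiderivative
  set F : ℝ → ℝ := fun x => ∫ y in (-1:ℝ)..x, r.eval y with hF
  have hder : ∀ x : ℝ, HasDerivAt F (r.eval x) x := fun x =>
    intervalIntegral.integral_hasDerivAt_right (hrc.intervalIntegrable _ _)
      (hrc.stronglyMeasurableAtFilter _ _) hrc.continuousAt
  have hFsub : ∀ j : Fin (n + 1), F (t j.succ) - F (t j.castSucc) = 0 := by
    intro j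
    have := intervalIntegral.integral_add_adjacent_intervals
      (μ := MeasureTheory.volume) (a := (-1:ℝ)) (b := t j.castSucc) (c := t j.succ)
      (hrc.intervalIntegrable _ _) (hrc.intervalIntegrable _ _)
    simp only [hF]
    rw [← this, hint j, add_zero, sub_self]
  -- a root in each open subinterval
  have hroot : ∀ j : Fin (n + 1), ∃ c ∈ Set.Ioo (t j.castSucc) (t j.succ), r.eval c = 0 := by
    intro j
    have hab : t j.castSucc < t j.succ := ht (Fin.castSucc_lt_succ (i := j))
    obtain ⟨c, hc, hc'⟩ := exists_hasDerivAt_eq_slope F (fun x => r.eval x) hab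
      (fun x _ => (hder x).continuousAt.continuousWithinAt) (fun x _ => hder x)
    refine ⟨c, hc, ?_⟩
    rw [hc', hFsub j, zero_div]
  choose c hc hc0 using hroot
  have hcmono : StrictMono c := by
    intro j k hjk
    calc c j < t j.succ := (hc j).2
    _ ≤ t k.castSucc := by
        apply ht.monotone
        exact Fin.succ_le_castSucc_iff.mpr hjk
    _ < c k := (hc k).1
  apply Polynomial.eq_zero_of_natDegree_lt_card_of_eval_eq_zero r hcmono.injective hc0
  rw [Fintype.card_fin]
  have : r.degree ≤ n := le_trans (degree_sub_le _ _) (max_le hp hq)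
  exact Nat.lt_succ_of_le (natDegree_le_iff_degree_le.mpr this)
end

section
/- A polynomial of degree at most n whose integral vanishes over each of the n+1 subintervals [t_j, t_{j+1}], j = 0,...,n, of a partition -1 = t_0 < t_1 < ... < t_{n+1} = 1, is the zero polynomial. -/
open Polynomial intervalIntegral

theorem vanishing_integrals_imp_zero_poly (n : ℕ) (t : Fin (n + 2) → ℝ)
    (ht : StrictMono t) (ht0 : t 0 = -1) (htN : t (Fin.last (n + 1)) = 1)
    (p : ℝ[X]) (hp : p.degree ≤ n)
    (h : ∀ j : Fin (n + 1),
      (∫ x in (t j.castSucc)..(t j.succ), p.eval x) = 0) :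
    p = 0 := by
  have hcont : Continuous fun x : ℝ => p.eval x := p.continuous
  set F : ℝ → ℝ := fun x => ∫ u in (t 0)..x, p.eval u with hF
  have hderiv : ∀ x, deriv F x = p.eval x := fun x =>
    Continuous.deriv_integral _ hcont _ x
  have hFdiff : ∀ x, DifferentiableAt ℝ F x := by
    intro x
    exact ((hcont.integral_hasStrictDerivAt (t 0) x).hasDerivAt).differentiableAt
  have key : ∀ j : Fin (n + 1), ∃ ξ ∈ Set.Ioo (t j.castSucc) (t j.succ),
      p.eval ξ = 0 := by
    intro j
    have hlt : t j.castSucc < t j.succ := ht Fin.castSucc_lt_succ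
    have heq : F (t j.castSucc) = F (t j.succ) := by
      have := intervalIntegral.integral_add_adjacent_intervals (μ := MeasureTheory.volume)
        (hcont.intervalIntegrable (t 0) (t j.castSucc))
        (hcont.intervalIntegrable (t j.castSucc) (t j.succ))
      simp only [hF]
      rw [← this, h j, add_zero]
    obtain ⟨c, hc, hc0⟩ := exists_deriv_eq_zero hlt
      (fun x _ => (hFdiff x).continuousAt.continuousWithinAt) heq
    exact ⟨c, hc, by rw [← hderiv c]; exact hc0⟩
  choose ξ hξ hξ0 using key
  have hinj : Function.Injective ξ := by
    have hmono : StrictMono ξ := by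
      intro j k hjk
      calc ξ j < t j.succ := (hξ j).2
        _ ≤ t k.castSucc := ht.monotone (by
            rw [Fin.le_def]; rw [Fin.lt_def] at hjk; simp only [Fin.val_succ, Fin.coe_castSucc]; omega)
        _ < ξ k := (hξ k).1
    exact hmono.injective
  refine p.eq_zero_of_natDegree_lt_card_of_eval_eq_zero hinj hξ0 ?_
  have : p.natDegree ≤ n := natDegree_le_iff_degree_le.mpr hp
  simpa using Nat.lt_succ_of_le this
end

section
/- Given real numbers M_0, ..., M_n and a partition -1 = t_0 < t_1 < ... < t_{n+1} = 1, there exists a unique polynomial p of degree at most n satisfying ∫_{t_j}^{t_{j+1}} p(t) dt = M_j for all j = 0, ..., n. -/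
open Polynomial

noncomputable def antideriv (p : ℝ[X]) : ℝ[X] :=
  p.sum fun k a => C (a / (k + 1)) * X ^ (k + 1)

lemma derivative_antideriv (p : ℝ[X]) : (antideriv p).derivative = p := by
  conv_rhs => rw [← p.sum_C_mul_X_pow_eq]
  unfold antideriv
  rw [Polynomial.sum, map_sum, Polynomial.sum]
  refine Finset.sum_congr rfl fun k hk => ?_
  rw [derivative_C_mul, derivative_X_pow]
  push_cast
  rw [← mul_assoc, ← C_mul, div_mul_cancel₀ _ (by positivity : ((k : ℝ) + 1) ≠ 0)]

lemma natDegree_antideriv_le (p : ℝ[X]) : (antideriv p).natDegree ≤ p.natDegree + 1 := by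
  refine (natDegree_sum_le _ _).trans ?_
  rw [Finset.fold_max_le]
  refine ⟨by omega, fun k hk => ?_⟩
  calc (C (p.coeff k / (k+1)) * X ^ (k+1)).natDegree ≤ k + 1 := by
        refine (natDegree_mul_le).trans ?_
        simp [natDegree_X_pow]
    _ ≤ p.natDegree + 1 := by
        have := le_natDegree_of_mem_supp k hk
        omega

lemma integral_eval (p : ℝ[X]) (a b : ℝ) :
    (∫ x in a..b, p.eval x) = (antideriv p).eval b - (antideriv p).eval a := by
  exact intervalIntegral.integral_eq_sub_of_hasDerivAt
    (f := fun x => (antideriv p).eval x)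
    (fun x _ => by simpa [derivative_antideriv] using (antideriv p).hasDerivAt x)
    (p.continuous.intervalIntegrable _ _)

theorem exists_unique_measure_preserving_poly (n : ℕ) (t : Fin (n + 2) → ℝ)
    (ht : StrictMono t) (ht0 : t 0 = -1) (htN : t (Fin.last (n + 1)) = 1)
    (M : Fin (n + 1) → ℝ) :
    ∃! p : ℝ[X], p.degree ≤ n ∧ ∀ j : Fin (n + 1),
      (∫ x in (t j.castSucc)..(t j.succ), p.eval x) = M j := by
  have hdeg : ∀ q : ℝ[X], q.degree < ((n + 1 : ℕ) : WithBot ℕ) ↔ q.degree ≤ (n : ℕ) := by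
    intro q
    cases hq : q.degree with
    | bot =>
      exact iff_of_true (by exact_mod_cast WithBot.bot_lt_coe (n + 1)) bot_le
    | coe m =>
      simp only [Nat.cast_withBot, WithBot.coe_lt_coe, WithBot.coe_le_coe]
      exact Nat.lt_succ_iff
  -- the linear map from degreeLT to the integrals
  set T : degreeLT ℝ (n + 1) →ₗ[ℝ] (Fin (n + 1) → ℝ) :=
    { toFun := fun p j => ∫ x in (t j.castSucc)..(t j.succ), Polynomial.eval x (p : ℝ[X])
      map_add' := by
        intro p q
        funext j
        have hp : IntervalIntegrable (fun x => Polynomial.eval x (p : ℝ[X]))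
            MeasureTheory.volume (t j.castSucc) (t j.succ) :=
          (p : ℝ[X]).continuous.intervalIntegrable _ _
        have hq : IntervalIntegrable (fun x => Polynomial.eval x (q : ℝ[X]))
            MeasureTheory.volume (t j.castSucc) (t j.succ) :=
          (q : ℝ[X]).continuous.intervalIntegrable _ _
        simp only [Submodule.coe_add, eval_add, Pi.add_apply]
        exact intervalIntegral.integral_add hp hq
      map_smul' := by
        intro c p
        funext j
        simp only [SetLike.val_smul, RingHom.id_apply, Pi.smul_apply, smul_eq_mul]
        rw [← intervalIntegral.integral_const_mul]
        simp [Polynomial.eval_smul, smul_eq_mul] }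
  -- injectivity
  have hinj : Function.Injective T := by
    rw [← LinearMap.ker_eq_bot, LinearMap.ker_eq_bot']
    intro p hp
    have hzero : ∀ j : Fin (n + 1),
        (antideriv (p : ℝ[X])).eval (t j.succ) = (antideriv (p : ℝ[X])).eval (t j.castSucc) := by
      intro j
      have := congrFun hp j
      simp only [T, LinearMap.coe_mk, AddHom.coe_mk, Pi.zero_apply] at this
      rw [integral_eval] at this
      linarith
    have hconst : ∀ i : Fin (n + 2),
        (antideriv (p : ℝ[X])).eval (t i) = (antideriv (p : ℝ[X])).eval (t 0) := by
      intro i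
      induction i using Fin.induction with
      | zero => rfl
      | succ i ih => rw [hzero i, ih]
    set R : ℝ[X] := antideriv (p : ℝ[X]) - C ((antideriv (p : ℝ[X])).eval (t 0)) with hR
    have hnatp : (p : ℝ[X]).natDegree ≤ n := by
      rcases eq_or_ne (p : ℝ[X]) 0 with h0 | h0
      · simp [h0]
      · have := (mem_degreeLT.mp p.2)
        exact Nat.lt_succ_iff.mp ((natDegree_lt_iff_degree_lt h0).mpr this)
    have hRzero : R = 0 := by
      refine eq_zero_of_natDegree_lt_card_of_eval_eq_zero R ht.injective (fun i => ?_) ?_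
      · simp [hR, hconst i]
      · have h1 : R.natDegree ≤ n + 1 := by
          refine (natDegree_sub_le _ _).trans ?_
          have := natDegree_antideriv_le (p : ℝ[X])
          simp only [natDegree_C]
          omega
        simp only [Fintype.card_fin]
        omega
    have : (p : ℝ[X]) = 0 := by
      have := congrArg Polynomial.derivative hRzero
      simpa [hR, derivative_antideriv] using this
    exact Subtype.ext this
  -- surjectivity via finrank
  have e := Polynomial.degreeLTEquiv ℝ (n + 1)
  haveI : FiniteDimensional ℝ (degreeLT ℝ (n + 1)) := LinearEquiv.finiteDimensional e.symm
  have hrank : Module.finrank ℝ (degreeLT ℝ (n + 1)) = Module.finrank ℝ (Fin (n + 1) → ℝ) :=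
    e.finrank_eq
  have hsurj : Function.Surjective T :=
    (LinearMap.injective_iff_surjective_of_finrank_eq_finrank hrank).mp hinj
  obtain ⟨p, hpM⟩ := hsurj M
  refine ⟨(p : ℝ[X]), ⟨?_, ?_⟩, ?_⟩
  · exact (hdeg _).mp (mem_degreeLT.mp p.2)
  · intro j
    have := congrFun hpM j
    simpa [T] using this
  · rintro q ⟨hq1, hq2⟩
    have hqmem : q ∈ degreeLT ℝ (n + 1) := mem_degreeLT.mpr ((hdeg q).mpr hq1)
    have : T ⟨q, hqmem⟩ = M := by
      funext j
      simpa [T] using hq2 j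
    have := hinj (this.trans hpM.symm)
    exact congrArg Subtype.val this
end

section
/- Let ℓ_{n,k} be the polynomial of degree at most n with ∫_{t_j}^{t_{j+1}} ℓ_{n,k}(t) dt = δ_{jk} for nodes -1 = t_0 < ... < t_{n+1} = 1. Then ℓ_{n,k} has exactly n roots in (-1,1), with exactly one simple root in each open interval (t_j, t_{j+1}) for each j ≠ k. -/
open Polynomial

lemma interval_eq_of_mem {n : ℕ} {t : Fin (n + 2) → ℝ} (ht : StrictMono t)
    {j j' : Fin (n + 1)} {x : ℝ} (h : x ∈ Set.Ioo (t j.castSucc) (t j.succ))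
    (h' : x ∈ Set.Ioo (t j'.castSucc) (t j'.succ)) : j = j' := by
  by_contra hne
  rcases lt_or_gt_of_ne hne with hlt | hlt
  · have hle : j.succ ≤ j'.castSucc := by
      simp only [Fin.le_def, Fin.val_succ, Fin.coe_castSucc]
      exact hlt
    have := ht.monotone hle
    have := h.2; have := h'.1
    linarith
  · have hle : j'.succ ≤ j.castSucc := by
      simp only [Fin.le_def, Fin.val_succ, Fin.coe_castSucc]
      exact hlt
    have := ht.monotone hle
    have := h.1; have := h'.2
    linarith

theorem basis_roots (n : ℕ) (t : Fin (n + 2) → ℝ)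
    (ht : StrictMono t) (ht0 : t 0 = -1) (htN : t (Fin.last (n + 1)) = 1)
    (k : Fin (n + 1)) (ℓ : ℝ[X]) (hdeg : ℓ.degree ≤ n)
    (hint : ∀ j : Fin (n + 1),
      (∫ x in (t j.castSucc)..(t j.succ), ℓ.eval x) = if j = k then 1 else 0) :
    (∀ j : Fin (n + 1), j ≠ k →
      ∃! τ, τ ∈ Set.Ioo (t j.castSucc) (t j.succ) ∧ ℓ.eval τ = 0 ∧
        ℓ.rootMultiplicity τ = 1) ∧
    ∀ τ ∈ Set.Ioo (-1 : ℝ) 1, ℓ.eval τ = 0 →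
      ∃ j : Fin (n + 1), j ≠ k ∧ τ ∈ Set.Ioo (t j.castSucc) (t j.succ) := by
  have hne : ℓ ≠ 0 := by
    intro h
    have := hint k
    simp [h] at this
  -- existence of a root in each interval j ≠ k
  have hroot : ∀ j : Fin (n + 1), j ≠ k →
      ∃ τ, τ ∈ Set.Ioo (t j.castSucc) (t j.succ) ∧ ℓ.eval τ = 0 := by
    intro j hj
    have hab : t j.castSucc < t j.succ := ht Fin.castSucc_lt_succ
    have hcont : Continuous fun x => ℓ.eval x := ℓ.continuous
    set F : ℝ → ℝ := fun x => ∫ s in (t j.castSucc)..x, ℓ.eval s with hF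
    have hFcont : Continuous F :=
      intervalIntegral.continuous_primitive (fun a b => hcont.intervalIntegrable a b) _
    have hFa : F (t j.castSucc) = 0 := intervalIntegral.integral_same
    have hFb : F (t j.succ) = 0 := by simpa [hj] using hint j
    obtain ⟨c, hc, hc0⟩ := exists_deriv_eq_zero hab hFcont.continuousOn (hFa.trans hFb.symm)
    refine ⟨c, hc, ?_⟩
    have hd := Continuous.deriv_integral (fun x => ℓ.eval x) hcont (t j.castSucc) c
    rw [← hd]
    exact hc0
  choose τ0 hτ0 using hroot
  classical
  set τ : Fin (n + 1) → ℝ := fun j => if h : j = k then 0 else (τ0 j h) with hτdef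
  have hτmem : ∀ j (hj : j ≠ k), τ j ∈ Set.Ioo (t j.castSucc) (t j.succ) := by
    intro j hj; simp only [hτdef, dif_neg hj]; exact (hτ0 j hj).1
  have hτroot : ∀ j (hj : j ≠ k), ℓ.eval (τ j) = 0 := by
    intro j hj; simp only [hτdef, dif_neg hj]; exact (hτ0 j hj).2
  set S : Finset ℝ := (Finset.univ.erase k).image τ with hSdef
  have hScard : S.card = n := by
    rw [hSdef, Finset.card_image_of_injOn, Finset.card_erase_of_mem (Finset.mem_univ k)]
    · simp
    · intro a ha b hb hab
      exact interval_eq_of_mem ht (hab ▸ hτmem a (Finset.ne_of_mem_erase ha))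
        (hτmem b (Finset.ne_of_mem_erase hb))
  have hSsub : S ⊆ ℓ.roots.toFinset := by
    intro x hx
    rw [hSdef, Finset.mem_image] at hx
    obtain ⟨j, hj, rfl⟩ := hx
    rw [Multiset.mem_toFinset, mem_roots hne]
    exact hτroot j (Finset.ne_of_mem_erase hj)
  have hcard : Multiset.card ℓ.roots ≤ n :=
    (ℓ.card_roots').trans (natDegree_le_iff_degree_le.mpr hdeg)
  have hle1 : n ≤ ℓ.roots.toFinset.card := hScard ▸ Finset.card_le_card hSsub
  have hle2 : ℓ.roots.toFinset.card ≤ Multiset.card ℓ.roots := ℓ.roots.toFinset_card_le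
  have hnodup : ℓ.roots.Nodup :=
    Multiset.toFinset_card_eq_card_iff_nodup.mp (le_antisymm hle2 (hcard.trans hle1))
  have hSeq : S = ℓ.roots.toFinset :=
    Finset.eq_of_subset_of_card_le hSsub (by omega)
  -- every root lies in some interval j ≠ k
  have hloc : ∀ x : ℝ, ℓ.eval x = 0 →
      ∃ j : Fin (n + 1), j ≠ k ∧ x ∈ Set.Ioo (t j.castSucc) (t j.succ) ∧ x = τ j := by
    intro x hx
    have : x ∈ S := by
      rw [hSeq, Multiset.mem_toFinset, mem_roots hne]; exact hx
    rw [hSdef, Finset.mem_image] at this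
    obtain ⟨j, hj, rfl⟩ := this
    exact ⟨j, Finset.ne_of_mem_erase hj, hτmem j (Finset.ne_of_mem_erase hj), rfl⟩
  have hmult : ∀ x : ℝ, ℓ.eval x = 0 → ℓ.rootMultiplicity x = 1 := by
    intro x hx
    rw [← ℓ.count_roots]
    exact Multiset.count_eq_one_of_mem hnodup ((mem_roots hne).mpr hx)
  constructor
  · intro j hj
    refine ⟨τ j, ⟨hτmem j hj, hτroot j hj, hmult _ (hτroot j hj)⟩, ?_⟩
    rintro y ⟨hy1, hy2, -⟩
    obtain ⟨j', hj', hmem', rfl⟩ := hloc y hy2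
    rw [interval_eq_of_mem ht hmem' hy1]
  · intro x hx hx0
    obtain ⟨j, hj, hmem, -⟩ := hloc x hx0
    exact ⟨j, hj, hmem⟩
end

section
/- Let D ∈ C^{n+1}[-1,1] and let p be the polynomial of degree at most n satisfying ∫_{t_j}^{t_{j+1}} p dt = ∫_{t_j}^{t_{j+1}} D dt for all j, with -1 = t_0 < ... < t_{n+1} = 1. Then for every t ∈ [-1,1] there exist points τ_0 < ... < τ_n with τ_j ∈ (t_j, t_{j+1}) and ξ ∈ (-1,1) such that D(t) - p(t) = D^{(n+1)}(ξ) / (n+1)! · ∏_{j=0}^{n} (t - τ_j). -/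
open Polynomial Set

lemma contDiff_polyEval (Q : ℝ[X]) (m : ℕ∞) : ContDiff ℝ m fun y : ℝ => Q.eval y := by
  have h : (fun y : ℝ => Q.eval y)
      = fun y => ∑ i ∈ Finset.range (Q.natDegree + 1), Q.coeff i * y ^ i := by
    funext y; rw [Polynomial.eval_eq_sum_range]
  rw [h]
  exact ContDiff.sum fun i _ => contDiff_const.mul (contDiff_id.pow i)

lemma polyIDW (s : Set ℝ) (hs : UniqueDiffOn ℝ s) (k : ℕ) (Q : ℝ[X]) :
    ∀ x ∈ s, iteratedDerivWithin k (fun y => Q.eval y) s x = (derivative^[k] Q).eval x := by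
  induction k generalizing Q with
  | zero => intro x hx; simp
  | succ k ih =>
    intro x hx
    rw [iteratedDerivWithin_succ']
    have heq : Set.EqOn (derivWithin (fun y => Q.eval y) s) (fun y => Q.derivative.eval y) s := by
      intro y hy
      exact ((Q.hasDerivAt y).hasDerivWithinAt).derivWithin (hs.uniqueDiffWithinAt hy)
    have := iteratedDerivWithin_congr (n := k) heq hx
    rw [this, ih Q.derivative x hx, Function.iterate_succ_apply]

lemma rolle_step (f : ℝ → ℝ) (hf : ContDiffOn ℝ 1 f (Set.Icc (-1 : ℝ) 1))
    (a b : ℝ) (hab : a < b) (ha : a ∈ Set.Icc (-1 : ℝ) 1) (hb : b ∈ Set.Icc (-1 : ℝ) 1)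
    (hfa : f a = 0) (hfb : f b = 0) :
    ∃ c ∈ Set.Ioo a b, derivWithin f (Set.Icc (-1 : ℝ) 1) c = 0 := by
  have hsub : Set.Icc a b ⊆ Set.Icc (-1 : ℝ) 1 := Set.Icc_subset_Icc ha.1 hb.2
  obtain ⟨c, hc, hc0⟩ := exists_deriv_eq_zero hab (hf.continuousOn.mono hsub) (hfa.trans hfb.symm)
  refine ⟨c, hc, ?_⟩
  have hnhds : Set.Icc (-1 : ℝ) 1 ∈ nhds c :=
    Icc_mem_nhds (lt_of_le_of_lt ha.1 hc.1) (lt_of_lt_of_le hc.2 hb.2)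
  rw [derivWithin_of_mem_nhds hnhds]
  exact hc0

lemma iter_rolle : ∀ (k : ℕ) (f : ℝ → ℝ), ContDiffOn ℝ (k + 1) f (Set.Icc (-1 : ℝ) 1) →
    ∀ s : Fin (k + 2) → ℝ, StrictMono s → (∀ i, s i ∈ Set.Icc (-1 : ℝ) 1) →
    (∀ i, f (s i) = 0) →
    ∃ ξ ∈ Set.Ioo (-1 : ℝ) 1, iteratedDerivWithin (k + 1) f (Set.Icc (-1 : ℝ) 1) ξ = 0 := by
  intro k
  induction k with
  | zero =>
    intro f hf s hs hmem hz
    obtain ⟨c, hc, hc0⟩ := rolle_step f hf (s 0) (s 1) (hs (by norm_num)) (hmem 0) (hmem 1)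
      (hz 0) (hz 1)
    have hcI : c ∈ Set.Ioo (-1 : ℝ) 1 :=
      ⟨lt_of_le_of_lt (hmem 0).1 hc.1, lt_of_lt_of_le hc.2 (hmem 1).2⟩
    refine ⟨c, hcI, ?_⟩
    rw [iteratedDerivWithin_one]
    exact hc0
  | succ k ih =>
    intro f hf s hs hmem hz
    have hud : UniqueDiffOn ℝ (Set.Icc (-1 : ℝ) 1) := uniqueDiffOn_Icc (by norm_num)
    have hf1 : ContDiffOn ℝ 1 f (Set.Icc (-1 : ℝ) 1) := hf.of_le (by
      exact_mod_cast Nat.one_le_iff_ne_zero.mpr (Nat.succ_ne_zero _))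
    have hstep : ∀ i : Fin (k + 2), ∃ c ∈ Set.Ioo (s i.castSucc) (s i.succ),
        derivWithin f (Set.Icc (-1 : ℝ) 1) c = 0 := fun i =>
      rolle_step f hf1 _ _ (hs (Fin.castSucc_lt_succ (i := i))) (hmem _) (hmem _) (hz _) (hz _)
    choose σ hσmem hσ0 using hstep
    have hσmono : StrictMono σ := by
      intro i j hij
      calc σ i < s i.succ := (hσmem i).2
        _ ≤ s j.castSucc := hs.monotone (Fin.succ_le_castSucc_iff.mpr hij)
        _ < σ j := (hσmem j).1
    have hσIcc : ∀ i, σ i ∈ Set.Icc (-1 : ℝ) 1 := fun i =>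
      ⟨le_of_lt (lt_of_le_of_lt (hmem i.castSucc).1 (hσmem i).1),
       le_of_lt (lt_of_lt_of_le (hσmem i).2 (hmem i.succ).2)⟩
    have hf' : ContDiffOn ℝ (k + 1) (derivWithin f (Set.Icc (-1 : ℝ) 1))
        (Set.Icc (-1 : ℝ) 1) := hf.derivWithin hud (by exact_mod_cast le_refl (k + 2))
    obtain ⟨ξ, hξ, hξ0⟩ := ih (derivWithin f (Set.Icc (-1 : ℝ) 1)) hf' σ hσmono hσIcc hσ0
    refine ⟨ξ, hξ, ?_⟩
    rw [iteratedDerivWithin_succ']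
    exact hξ0

lemma exists_zero_of_integral_eq (D : ℝ → ℝ) (hD : ContinuousOn D (Set.Icc (-1 : ℝ) 1))
    (p : ℝ[X]) (a b : ℝ) (hab : a < b) (ha : -1 ≤ a) (hb : b ≤ 1)
    (h : (∫ x in a..b, p.eval x) = ∫ x in a..b, D x) :
    ∃ c ∈ Set.Ioo a b, D c = p.eval c := by
  set f : ℝ → ℝ := fun y => D y - p.eval y with hf
  have hsub : Set.Icc a b ⊆ Set.Icc (-1 : ℝ) 1 := Set.Icc_subset_Icc ha hb
  have hfc : ContinuousOn f (Set.Icc (-1 : ℝ) 1) :=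
    hD.sub (Polynomial.continuous p).continuousOn
  have hfcab : ContinuousOn f (Set.Icc a b) := hfc.mono hsub
  set F : ℝ → ℝ := fun y => ∫ x in a..y, f x with hF
  have hFcont : ContinuousOn F (Set.Icc a b) := by
    have := intervalIntegral.continuousOn_primitive_interval
      (f := f) (a := a) (b := b) (μ := MeasureTheory.volume) ?_
    · rwa [Set.uIcc_of_le hab.le] at this
    · rw [Set.uIcc_of_le hab.le]
      exact hfcab.integrableOn_Icc
  have hFa : F a = 0 := intervalIntegral.integral_same
  have hFb : F b = 0 := by
    have hpD : IntervalIntegrable (fun x => p.eval x) MeasureTheory.volume a b :=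
      ((Polynomial.continuous p).continuousOn).intervalIntegrable
    have hDD : IntervalIntegrable D MeasureTheory.volume a b := by
      apply ContinuousOn.intervalIntegrable
      rw [Set.uIcc_of_le hab.le]; exact hD.mono hsub
    have : F b = (∫ x in a..b, D x) - ∫ x in a..b, p.eval x := by
      rw [hF]; exact intervalIntegral.integral_sub hDD hpD
    rw [this, ← h, sub_self]
  have hderiv : ∀ c ∈ Set.Ioo a b, HasDerivAt F (f c) c := by
    intro c hc
    have hcI : c ∈ Set.Ioo (-1 : ℝ) 1 :=
      ⟨lt_of_le_of_lt ha hc.1, lt_of_lt_of_le hc.2 hb⟩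
    have hint : IntervalIntegrable f MeasureTheory.volume a c := by
      apply ContinuousOn.intervalIntegrable
      exact hfc.mono (fun y hy => by
        rw [Set.uIcc_of_le hc.1.le] at hy
        exact ⟨le_trans ha hy.1, le_trans hy.2 (le_trans hc.2.le hb)⟩)
    have hmeas : StronglyMeasurableAtFilter f (nhds c) MeasureTheory.volume :=
      (hfc.mono Set.Ioo_subset_Icc_self).stronglyMeasurableAtFilter isOpen_Ioo c hcI
    have hca : ContinuousAt f c :=
      hfc.continuousAt (Icc_mem_nhds hcI.1 hcI.2)
    exact intervalIntegral.integral_hasDerivAt_right hint hmeas hca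
  obtain ⟨c, hc, hc0⟩ := exists_hasDerivAt_eq_zero hab hFcont (hFa.trans hFb.symm) hderiv
  exact ⟨c, hc, sub_eq_zero.mp hc0⟩

lemma iterate_deriv_eval (n : ℕ) (Q : ℝ[X]) (hQ : Q.natDegree ≤ n + 1) (x : ℝ) :
    (derivative^[n + 1] Q).eval x = (n + 1).factorial * Q.coeff (n + 1) := by
  have hdeg : (derivative^[n + 1] Q).natDegree = 0 :=
    Nat.le_zero.mp ((Polynomial.natDegree_iterate_derivative Q (n + 1)).trans
      (by omega))
  rw [Polynomial.eq_C_of_natDegree_le_zero hdeg.le, Polynomial.eval_C,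
    Polynomial.coeff_iterate_derivative, zero_add, Nat.descFactorial_self, nsmul_eq_mul]

theorem measure_preserving_poly_error (n : ℕ) (t : Fin (n + 2) → ℝ)
    (ht : StrictMono t) (ht0 : t 0 = -1) (htN : t (Fin.last (n + 1)) = 1)
    (D : ℝ → ℝ) (hD : ContDiffOn ℝ (n + 1) D (Set.Icc (-1) 1))
    (p : ℝ[X]) (hdeg : p.degree ≤ n)
    (hint : ∀ j : Fin (n + 1),
      (∫ x in (t j.castSucc)..(t j.succ), p.eval x) =
        ∫ x in (t j.castSucc)..(t j.succ), D x) :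
    ∀ x ∈ Set.Icc (-1 : ℝ) 1, ∃ τ : Fin (n + 1) → ℝ, StrictMono τ ∧
      (∀ j, τ j ∈ Set.Ioo (t j.castSucc) (t j.succ)) ∧
      ∃ ξ ∈ Set.Ioo (-1 : ℝ) 1,
        D x - p.eval x =
          iteratedDerivWithin (n + 1) D (Set.Icc (-1) 1) ξ / (n + 1).factorial *
            ∏ j, (x - τ j) := by
  intro x hx
  have htIcc : ∀ i : Fin (n + 2), t i ∈ Set.Icc (-1 : ℝ) 1 := fun i =>
    ⟨ht0 ▸ ht.monotone (Fin.zero_le i), htN ▸ ht.monotone (Fin.le_last i)⟩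
  have hDc : ContinuousOn D (Set.Icc (-1 : ℝ) 1) := hD.continuousOn
  have hτex : ∀ j : Fin (n + 1), ∃ c ∈ Set.Ioo (t j.castSucc) (t j.succ), D c = p.eval c :=
    fun j => exists_zero_of_integral_eq D hDc p _ _ (ht (Fin.castSucc_lt_succ (i := j)))
      (htIcc j.castSucc).1 (htIcc j.succ).2 (hint j)
  choose τ hτmem hτeq using hτex
  have hτmono : StrictMono τ := by
    intro i j hij
    calc τ i < t i.succ := (hτmem i).2
      _ ≤ t j.castSucc := ht.monotone (Fin.succ_le_castSucc_iff.mpr hij)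
      _ < τ j := (hτmem j).1
  have hτIcc : ∀ j, τ j ∈ Set.Icc (-1 : ℝ) 1 := fun j =>
    ⟨(htIcc j.castSucc).1.trans (hτmem j).1.le, (hτmem j).2.le.trans (htIcc j.succ).2⟩
  refine ⟨τ, hτmono, hτmem, ?_⟩
  by_cases hprod : (∏ j, (x - τ j)) = 0
  · obtain ⟨j, _, hj⟩ := Finset.prod_eq_zero_iff.mp hprod
    refine ⟨0, by norm_num, ?_⟩
    rw [hprod, mul_zero]
    have hxτ : x = τ j := by have := sub_eq_zero.mp hj; linarith
    rw [hxτ, hτeq j, sub_self]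
  · set lam : ℝ := (D x - p.eval x) / ∏ j, (x - τ j) with hlam
    set Q : ℝ[X] := p + C lam * ∏ j, (X - C (τ j)) with hQdef
    set g : ℝ → ℝ := fun y => D y - Q.eval y with hg
    have hQeval : ∀ y, Q.eval y = p.eval y + lam * ∏ j, (y - τ j) := by
      intro y; simp [hQdef, Polynomial.eval_prod]
    have hgx : g x = 0 := by
      rw [hg]
      simp only [hQeval, hlam]
      rw [div_mul_cancel₀ _ hprod]
      ring
    have hgτ : ∀ j, g (τ j) = 0 := by
      intro j
      rw [hg]
      simp only [hQeval]
      have hz : ∏ j1 : Fin (n + 1), (τ j - τ j1) = 0 :=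
        Finset.prod_eq_zero (Finset.mem_univ j) (sub_self _)
      rw [hz, mul_zero, add_zero, hτeq j, sub_self]
    have hud : UniqueDiffOn ℝ (Set.Icc (-1 : ℝ) 1) := uniqueDiffOn_Icc (by norm_num)
    have hQc : ContDiff ℝ (n + 1) fun y : ℝ => Q.eval y := contDiff_polyEval Q _
    have hgC : ContDiffOn ℝ (n + 1) g (Set.Icc (-1 : ℝ) 1) := hD.sub hQc.contDiffOn
    -- the zero set
    have hxni : x ∉ Finset.image τ Finset.univ := by
      intro hmem
      obtain ⟨j, _, hj⟩ := Finset.mem_image.mp hmem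
      exact hprod (Finset.prod_eq_zero (Finset.mem_univ j) (by rw [hj, sub_self]))
    have hcard : (insert x (Finset.image τ Finset.univ)).card = n + 2 := by
      rw [Finset.card_insert_of_notMem hxni,
        Finset.card_image_of_injective _ hτmono.injective, Finset.card_univ,
        Fintype.card_fin]
    set Z := insert x (Finset.image τ Finset.univ) with hZ
    set s : Fin (n + 2) → ℝ := fun i => Z.orderEmbOfFin hcard i with hs
    have hsmono : StrictMono s := (Z.orderEmbOfFin hcard).strictMono
    have hsZ : ∀ i, s i ∈ Z := fun i => Z.orderEmbOfFin_mem hcard i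
    have hsIcc : ∀ i, s i ∈ Set.Icc (-1 : ℝ) 1 := by
      intro i
      rcases Finset.mem_insert.mp (hsZ i) with h | h
      · rw [h]; exact hx
      · obtain ⟨j, _, hj⟩ := Finset.mem_image.mp h
        rw [← hj]; exact hτIcc j
    have hsz : ∀ i, g (s i) = 0 := by
      intro i
      rcases Finset.mem_insert.mp (hsZ i) with h | h
      · rw [h]; exact hgx
      · obtain ⟨j, _, hj⟩ := Finset.mem_image.mp h
        rw [← hj]; exact hgτ j
    obtain ⟨ξ, hξ, hξ0⟩ := iter_rolle n g hgC s hsmono hsIcc hsz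
    refine ⟨ξ, hξ, ?_⟩
    have hξIcc : ξ ∈ Set.Icc (-1 : ℝ) 1 := ⟨hξ.1.le, hξ.2.le⟩
    -- split the iterated derivative
    have hsplit : iteratedDerivWithin (n + 1) g (Set.Icc (-1 : ℝ) 1) ξ =
        iteratedDerivWithin (n + 1) D (Set.Icc (-1 : ℝ) 1) ξ -
          iteratedDerivWithin (n + 1) (fun y => Q.eval y) (Set.Icc (-1 : ℝ) 1) ξ := by
      have := iteratedDerivWithin_sub (𝕜 := ℝ) hξIcc hud (hD.contDiffWithinAt hξIcc) hQc.contDiffWithinAt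
      exact this
    -- compute the polynomial part
    have hprodmonic : (∏ j : Fin (n + 1), (X - C (τ j))).Monic :=
      monic_prod_of_monic _ _ fun j _ => monic_X_sub_C (τ j)
    have hproddeg : (∏ j : Fin (n + 1), (X - C (τ j))).natDegree = n + 1 := by
      rw [Polynomial.natDegree_prod _ _ fun j _ => X_sub_C_ne_zero (τ j)]
      simp [Polynomial.natDegree_X_sub_C]
    have hpn : p.natDegree ≤ n := Polynomial.natDegree_le_iff_degree_le.mpr hdeg
    have hQdeg : Q.natDegree ≤ n + 1 := by
      rw [hQdef]
      refine (Polynomial.natDegree_add_le _ _).trans (max_le (hpn.trans (by omega)) ?_)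
      exact (Polynomial.natDegree_C_mul_le _ _).trans hproddeg.le
    have hQcoeff : Q.coeff (n + 1) = lam := by
      rw [hQdef, Polynomial.coeff_add, Polynomial.coeff_C_mul,
        Polynomial.coeff_eq_zero_of_natDegree_lt (by omega : p.natDegree < n + 1)]
      have : (∏ j : Fin (n + 1), (X - C (τ j))).coeff (n + 1) = 1 := by
        have := hprodmonic.leadingCoeff
        rwa [Polynomial.leadingCoeff, hproddeg] at this
      rw [this, zero_add, mul_one]
    have hpoly : iteratedDerivWithin (n + 1) (fun y => Q.eval y) (Set.Icc (-1 : ℝ) 1) ξ =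
        (n + 1).factorial * lam := by
      rw [polyIDW _ hud (n + 1) Q ξ hξIcc, iterate_deriv_eval n Q hQdeg, hQcoeff]
    have hlameq : lam = iteratedDerivWithin (n + 1) D (Set.Icc (-1 : ℝ) 1) ξ /
        (n + 1).factorial := by
      have h0 : iteratedDerivWithin (n + 1) D (Set.Icc (-1 : ℝ) 1) ξ -
          (n + 1).factorial * lam = 0 := by
        rw [← hpoly, ← hsplit]; exact hξ0
      rw [show iteratedDerivWithin (n + 1) D (Set.Icc (-1 : ℝ) 1) ξ =
          (n + 1).factorial * lam by linarith]
      field_simp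
    calc D x - p.eval x = lam * ∏ j, (x - τ j) := (div_mul_cancel₀ _ hprod).symm
      _ = _ := by rw [hlameq]
end

section
/- The map g₁ : [0,1] → [0,1] defined by g₁(x) = 2x/(1-x²) for 0 ≤ x ≤ √2 - 1 and g₁(x) = (1-x²)/(2x) for √2 - 1 ≤ x ≤ 1 preserves the absolutely continuous measure with density d₁(x) = 4/(π(1+x²)): for every interval [a,b] ⊆ [0,1], ∫_{g₁^{-1}([a,b])} d₁(x) dx = ∫_a^b d₁(x) dx. -/
open MeasureTheory Real

noncomputable def myX1 (t : ℝ) : ℝ := t / (1 + Real.sqrt (1 + t ^ 2))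
noncomputable def myX2 (t : ℝ) : ℝ := Real.sqrt (1 + t ^ 2) - t

lemma myS_sq (t : ℝ) : (Real.sqrt (1 + t ^ 2)) ^ 2 = 1 + t ^ 2 :=
  Real.sq_sqrt (by positivity)

lemma myS_pos (t : ℝ) : 0 < Real.sqrt (1 + t ^ 2) :=
  Real.sqrt_pos.mpr (by positivity)

lemma myS_one_le (t : ℝ) : 1 ≤ Real.sqrt (1 + t ^ 2) := by
  nlinarith [myS_sq t, myS_pos t, sq_nonneg t]

lemma sqrt2_sq : (Real.sqrt 2) ^ 2 = 2 := Real.sq_sqrt (by norm_num)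

lemma sqrt2_gt_one : 1 < Real.sqrt 2 := by
  nlinarith [sqrt2_sq, Real.sqrt_nonneg 2]

-- monotonicity of branch 1
lemma f1_le_f1 {x y : ℝ} (hx0 : 0 ≤ x) (hx1 : x < 1) (hy0 : 0 ≤ y) (hy1 : y < 1) :
    2 * x / (1 - x ^ 2) ≤ 2 * y / (1 - y ^ 2) ↔ x ≤ y := by
  rw [div_le_div_iff₀ (by nlinarith) (by nlinarith)]
  constructor <;> intro h <;> nlinarith [mul_nonneg hx0 hy0]

-- antitonicity of branch 2
lemma f2_le_f2 {x y : ℝ} (hx0 : 0 < x) (hy0 : 0 < y) :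
    (1 - x ^ 2) / (2 * x) ≤ (1 - y ^ 2) / (2 * y) ↔ y ≤ x := by
  rw [div_le_div_iff₀ (by positivity) (by positivity)]
  constructor <;> intro h <;> nlinarith [mul_pos hx0 hy0]

lemma myX1_nonneg {t : ℝ} (ht : 0 ≤ t) : 0 ≤ myX1 t := by
  unfold myX1; positivity

lemma myX1_lt_one {t : ℝ} (ht : 0 ≤ t) (ht1 : t ≤ 1) : myX1 t < 1 := by
  unfold myX1
  rw [div_lt_one (by positivity)]
  nlinarith [myS_one_le t]

lemma myX1_le {t : ℝ} (ht : 0 ≤ t) (ht1 : t ≤ 1) : myX1 t ≤ Real.sqrt 2 - 1 := by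
  unfold myX1
  rw [div_le_iff₀ (by positivity)]
  set s := Real.sqrt (1 + t ^ 2) with hsdef
  have hs2 : s ^ 2 = 1 + t ^ 2 := myS_sq t
  have hs0 : 0 < s := myS_pos t
  have hr1 : 1 < Real.sqrt 2 := sqrt2_gt_one
  have h1 : t * (1 + Real.sqrt 2) ≤ 1 + s := by
    rcases le_or_gt (t * (1 + Real.sqrt 2)) 1 with h | h
    · linarith
    · have hu : 0 < t * (1 + Real.sqrt 2) - 1 := by linarith
      have hsq : (t * (1 + Real.sqrt 2) - 1) ^ 2 ≤ s ^ 2 := by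
        rw [hs2]
        nlinarith [sqrt2_sq,
          mul_nonneg (mul_nonneg ht (by linarith : (0:ℝ) ≤ 1 + Real.sqrt 2))
            (sub_nonneg.mpr ht1)]
      nlinarith [hsq, hu, hs0]
  have hpos : (0:ℝ) < 1 + Real.sqrt 2 := by linarith
  have expand : (Real.sqrt 2 - 1) * (1 + s) * (1 + Real.sqrt 2) = 1 + s := by
    linear_combination (1 + s) * sqrt2_sq
  refine (mul_le_mul_iff_of_pos_right hpos).mp ?_
  rw [expand]
  exact h1

lemma myX2_pos (t : ℝ) (ht : 0 ≤ t) : 0 < myX2 t := by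
  unfold myX2
  nlinarith [myS_sq t, myS_pos t]

lemma myX2_le_one {t : ℝ} (ht : 0 ≤ t) : myX2 t ≤ 1 := by
  unfold myX2
  nlinarith [myS_sq t, myS_pos t]

lemma myX2_ge {t : ℝ} (ht : 0 ≤ t) (ht1 : t ≤ 1) : Real.sqrt 2 - 1 ≤ myX2 t := by
  unfold myX2
  nlinarith [myS_sq t, myS_pos t, sqrt2_sq, sqrt2_gt_one,
    mul_pos (myS_pos t) (by nlinarith [sqrt2_gt_one] : (0:ℝ) < 1 + Real.sqrt 2)]

lemma f1_myX1 {t : ℝ} (ht : 0 ≤ t) : 2 * myX1 t / (1 - (myX1 t) ^ 2) = t := by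
  unfold myX1
  set s := Real.sqrt (1 + t ^ 2) with hs
  have hs2 : s ^ 2 = 1 + t ^ 2 := myS_sq t
  have hs0 : 0 < s := myS_pos t
  have h1s : (0:ℝ) < 1 + s := by linarith
  have hden : 1 - (t / (1 + s)) ^ 2 = 2 / (1 + s) := by
    field_simp
    nlinarith [hs2]
  rw [hden]
  field_simp

lemma f2_myX2 {t : ℝ} (ht : 0 ≤ t) : (1 - (myX2 t) ^ 2) / (2 * myX2 t) = t := by
  unfold myX2
  set s := Real.sqrt (1 + t ^ 2) with hs
  have hs2 : s ^ 2 = 1 + t ^ 2 := myS_sq t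
  have hst : 0 < s - t := by nlinarith [myS_pos t]
  rw [div_eq_iff (by positivity)]
  nlinarith [hs2]

lemma arctan_myX1 {t : ℝ} (ht : 0 ≤ t) (ht1 : t ≤ 1) :
    Real.arctan (myX1 t) = Real.arctan t / 2 := by
  have h1 : myX1 t * myX1 t < 1 := by
    have := myX1_lt_one ht ht1
    have := myX1_nonneg (t := t) ht
    nlinarith
  have key := Real.arctan_add h1
  have : (myX1 t + myX1 t) / (1 - myX1 t * myX1 t) = t := by
    rw [show myX1 t + myX1 t = 2 * myX1 t by ring, show myX1 t * myX1 t = (myX1 t)^2 by ring]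
    exact f1_myX1 ht
  rw [this] at key
  linarith

lemma arctan_myX2 {t : ℝ} (ht : 0 ≤ t) (ht1 : t ≤ 1) :
    Real.arctan (myX2 t) = π / 4 - Real.arctan t / 2 := by
  rcases eq_or_lt_of_le ht with h0 | h0
  · have : myX2 t = 1 := by
      unfold myX2; rw [← h0]; norm_num
    rw [this, ← h0]
    simp [Real.arctan_one]
  · have hx2lt : myX2 t < 1 := by
      unfold myX2
      nlinarith [myS_sq t, myS_pos t]
    have hx2pos : 0 < myX2 t := myX2_pos t ht
    have h1 : myX2 t * myX2 t < 1 := by nlinarith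
    have key := Real.arctan_add h1
    have : (myX2 t + myX2 t) / (1 - myX2 t * myX2 t) = t⁻¹ := by
      have step : (myX2 t + myX2 t) / (1 - myX2 t * myX2 t)
          = ((1 - (myX2 t) ^ 2) / (2 * myX2 t))⁻¹ := by
        rw [inv_div]; ring_nf
      rw [step, f2_myX2 ht]
    rw [this, Real.arctan_inv_of_pos h0] at key
    linarith

lemma int_d (p q : ℝ) (hpq : p ≤ q) :
    ∫ x in Set.Icc p q, 4 / (π * (1 + x ^ 2)) =
      4 / π * (Real.arctan q - Real.arctan p) := by
  rw [MeasureTheory.integral_Icc_eq_integral_Ioc, ← intervalIntegral.integral_of_le hpq]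
  have h : ∀ x : ℝ, 4 / (π * (1 + x ^ 2)) = 4 / π * (1 / (1 + x ^ 2)) := by
    intro x; rw [div_mul_div_comm]; ring_nf
  simp_rw [h]
  rw [intervalIntegral.integral_const_mul, integral_one_div_one_add_sq]

theorem g1_preserves_d1 :
    let g : ℝ → ℝ := fun x =>
      if x ≤ Real.sqrt 2 - 1 then 2 * x / (1 - x ^ 2) else (1 - x ^ 2) / (2 * x)
    let d : ℝ → ℝ := fun x => 4 / (Real.pi * (1 + x ^ 2))
    ∀ a b : ℝ, 0 ≤ a → a ≤ b → b ≤ 1 →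
      (∫ x in g ⁻¹' Set.Icc a b ∩ Set.Icc 0 1, d x) = ∫ x in Set.Icc a b, d x := by
  intro g d a b ha hab hb
  have ha1 : a ≤ 1 := le_trans hab hb
  have hb0 : 0 ≤ b := le_trans ha hab
  have hr1 : 1 < Real.sqrt 2 := sqrt2_gt_one
  have hr2 : (Real.sqrt 2) ^ 2 = 2 := sqrt2_sq
  have hr3 : Real.sqrt 2 < 2 := by nlinarith [sqrt2_sq, Real.sqrt_nonneg 2]
  -- the preimage
  have hset : g ⁻¹' Set.Icc a b ∩ Set.Icc 0 1 =
      Set.Icc (myX1 a) (myX1 b) ∪ Set.Icc (myX2 b) (myX2 a) := by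
    ext x
    simp only [Set.mem_inter_iff, Set.mem_preimage, Set.mem_Icc, Set.mem_union, g]
    constructor
    · rintro ⟨⟨hga, hgb⟩, hx0, hx1⟩
      by_cases hc : x ≤ Real.sqrt 2 - 1
      · rw [if_pos hc] at hga hgb
        left
        have hxlt : x < 1 := by linarith
        constructor
        · rw [← f1_le_f1 (myX1_nonneg ha) (myX1_lt_one ha ha1) hx0 hxlt, f1_myX1 ha]
          exact hga
        · rw [← f1_le_f1 hx0 hxlt (myX1_nonneg hb0) (myX1_lt_one hb0 hb), f1_myX1 hb0]
          exact hgb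
      · rw [if_neg hc] at hga hgb
        push_neg at hc
        right
        have hxpos : 0 < x := by linarith
        constructor
        · rw [← f2_le_f2 hxpos (myX2_pos b hb0), f2_myX2 hb0]
          exact hgb
        · rw [← f2_le_f2 (myX2_pos a ha) hxpos, f2_myX2 ha]
          exact hga
    · rintro (⟨h1, h2⟩ | ⟨h1, h2⟩)
      · have hx0 : 0 ≤ x := le_trans (myX1_nonneg ha) h1
        have hxle : x ≤ Real.sqrt 2 - 1 := le_trans h2 (myX1_le hb0 hb)
        have hxlt : x < 1 := by linarith
        refine ⟨⟨?_, ?_⟩, hx0, by linarith⟩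
        · rw [if_pos hxle]
          rw [← f1_myX1 ha]
          exact (f1_le_f1 (myX1_nonneg ha) (myX1_lt_one ha ha1) hx0 hxlt).mpr h1
        · rw [if_pos hxle]
          rw [← f1_myX1 hb0]
          exact (f1_le_f1 hx0 hxlt (myX1_nonneg hb0) (myX1_lt_one hb0 hb)).mpr h2
      · have hxge : Real.sqrt 2 - 1 ≤ x := le_trans (myX2_ge hb0 hb) h1
        have hxle1 : x ≤ 1 := le_trans h2 (myX2_le_one ha)
        have hxpos : 0 < x := by linarith
        refine ⟨?_, by linarith, hxle1⟩
        by_cases hc : x ≤ Real.sqrt 2 - 1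
        · -- then x = √2 - 1 and b = 1
          have hxeq : x = Real.sqrt 2 - 1 := le_antisymm hc hxge
          have hx2b : myX2 b = Real.sqrt 2 - 1 := by
            have := myX2_ge hb0 hb
            have : myX2 b ≤ Real.sqrt 2 - 1 := by rw [← hxeq]; exact h1
            linarith [myX2_ge hb0 hb]
          have hx21 : myX2 1 = Real.sqrt 2 - 1 := by
            unfold myX2; norm_num
          have hbone : b = 1 := by
            have e1 := f2_myX2 hb0
            have e2 := f2_myX2 (t := 1) (by norm_num)
            rw [hx2b] at e1
            rw [hx21] at e2
            exact e1.symm.trans e2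
          rw [if_pos hc, hxeq]
          have hval : 2 * (Real.sqrt 2 - 1) / (1 - (Real.sqrt 2 - 1) ^ 2) = 1 := by
            rw [div_eq_one_iff_eq (by nlinarith)]
            nlinarith
          rw [hval, hbone]
          exact ⟨ha1, le_refl 1⟩
        · rw [if_neg hc]
          constructor
          · rw [← f2_myX2 ha]
            exact (f2_le_f2 (myX2_pos a ha) hxpos).mpr h2
          · rw [← f2_myX2 hb0]
            exact (f2_le_f2 hxpos (myX2_pos b hb0)).mpr h1
  have hcont : Continuous fun x : ℝ => 4 / (Real.pi * (1 + x ^ 2)) := by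
    apply continuous_const.div (by continuity)
    intro x
    have := Real.pi_pos
    positivity
  have hd : ∀ p q : ℝ, IntegrableOn (fun x : ℝ => 4 / (Real.pi * (1 + x ^ 2))) (Set.Icc p q) volume :=
    fun p q => hcont.integrableOn_Icc
  have hx1ab : myX1 a ≤ myX1 b := by
    rw [← f1_le_f1 (myX1_nonneg ha) (myX1_lt_one ha ha1) (myX1_nonneg hb0) (myX1_lt_one hb0 hb),
      f1_myX1 ha, f1_myX1 hb0]
    exact hab
  have hx2ab : myX2 b ≤ myX2 a := by
    rw [← f2_le_f2 (myX2_pos a ha) (myX2_pos b hb0), f2_myX2 ha, f2_myX2 hb0]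
    exact hab
  have hdisj : AEDisjoint volume (Set.Icc (myX1 a) (myX1 b)) (Set.Icc (myX2 b) (myX2 a)) := by
    have hsub : Set.Icc (myX1 a) (myX1 b) ∩ Set.Icc (myX2 b) (myX2 a) ⊆
        Set.Icc (myX2 b) (myX1 b) := by
      rintro x ⟨⟨_, h2⟩, ⟨h3, _⟩⟩
      exact ⟨h3, h2⟩
    refine measure_mono_null hsub ?_
    rw [Real.volume_Icc, ENNReal.ofReal_eq_zero]
    have := myX1_le hb0 hb
    have := myX2_ge hb0 hb
    linarith
  simp only [d]
  rw [hset]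
  rw [MeasureTheory.integral_union_ae hdisj measurableSet_Icc.nullMeasurableSet (hd _ _) (hd _ _)]
  rw [int_d _ _ hx1ab, int_d _ _ hx2ab, int_d _ _ hab]
  rw [arctan_myX1 ha ha1, arctan_myX1 hb0 hb, arctan_myX2 ha ha1, arctan_myX2 hb0 hb]
  ring
end
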